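/- Let m, n₁, n₂ be positive integers, L > 0, and ρ ∈ (0, 1). Let W = (w_{ij}) ∈ ℝ^{m×m} satisfy Σ_{j=1}^m w_{ij} = 1 for every i, Σ_{i=1}^m w_{ij} = 1 for every j, and ‖(W − (1/m)𝟏𝟏ᵀ)v‖ ≤ ρ‖v‖ for every v ∈ ℝ^m. For each i ∈ {1,…,m}, let f_i : ℝ^{n₁} × ℝ^{n₂} → ℝ be differentiable with L-Lipschitz gradient. Let (x_i, y_i, v_i)_{i=1}^m and (x'_i, y'_i, v'_i)_{i=1}^m be tuples with x_i, x'_i, v_i, v'_i ∈ ℝ^{n₁} and y_i, y'_i ∈ ℝ^{n₂} related by the gradient-tracking update v'_i = Σ_{j=1}^m w_{ij} v_j + ∇_x f_i(x'_i, y'_i) − ∇_x f_i(x_i, y_i) for each i. Write v̄ = (1/m)Σ_i v_i and v̄' = (1/m)Σ_i v'_i. Then Σ_{i=1}^m ‖v'_i − v̄'‖² ≤ ρ Σ_{i=1}^m ‖v_i − v̄‖² + (L²/(1−ρ)) (Σ_{i=1}^m ‖x'_i − x_i‖² + Σ_{i=1}^m ‖y'_i − y_i‖²). -/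

import Mathlib

open scoped BigOperators RealInnerProductSpace

lemma sum_sq_center_le {E : Type*} [NormedAddCommGroup E] [InnerProductSpace ℝ E]
    {m : ℕ} (hm : 0 < m) (p : Fin m → E) (c : E) :
    ∑ i, ‖p i - (1 / (m : ℝ)) • ∑ k, p k‖ ^ 2 ≤ ∑ i, ‖p i - c‖ ^ 2 := by
  set μ := (1 / (m : ℝ)) • ∑ k, p k with hμ
  have hm0 : ((m : ℝ)) ≠ 0 := by positivity
  have hsum : ∑ k, p k = (m : ℝ) • μ := by
    rw [hμ, smul_smul, mul_one_div, div_self hm0, one_smul]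
  have key : ∀ i, ‖p i - μ‖ ^ 2
      = ‖p i - c‖ ^ 2 - 2 * (inner ℝ (p i - c) (μ - c) : ℝ) + ‖μ - c‖ ^ 2 := by
    intro i
    have h1 : p i - μ = (p i - c) - (μ - c) := by abel
    rw [h1, norm_sub_sq_real]
  have hinner : ∑ i, (inner ℝ (p i - c) (μ - c) : ℝ) = (m : ℝ) * ‖μ - c‖ ^ 2 := by
    rw [← sum_inner]
    have h2 : ∑ i : Fin m, (p i - c) = (m : ℝ) • (μ - c) := by
      rw [Finset.sum_sub_distrib, hsum, smul_sub]
      congr 1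
      simp [Finset.sum_const, Nat.cast_smul_eq_nsmul ℝ]
    rw [h2, real_inner_smul_left, real_inner_self_eq_norm_sq]
  have hsum2 : ∑ i, ‖p i - μ‖ ^ 2
      = ∑ i, ‖p i - c‖ ^ 2 - (m : ℝ) * ‖μ - c‖ ^ 2 := by
    simp only [key]
    rw [Finset.sum_add_distrib, Finset.sum_sub_distrib, ← Finset.mul_sum, hinner]
    simp [Finset.sum_const]
    ring
  rw [hsum2]
  nlinarith [sq_nonneg ‖μ - c‖, (by exact_mod_cast hm : (0:ℝ) < (m:ℝ))]

lemma vec_contr {m n : ℕ} (ρ : ℝ) (w : Fin m → Fin m → ℝ)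
    (hcontr : ∀ v : Fin m → ℝ,
      ∑ i, (∑ j, (w i j - 1 / (m : ℝ)) * v j) ^ 2 ≤ ρ ^ 2 * ∑ j, (v j) ^ 2)
    (u : Fin m → EuclideanSpace ℝ (Fin n)) :
    ∑ i, ‖∑ j, (w i j - 1 / (m : ℝ)) • u j‖ ^ 2 ≤ ρ ^ 2 * ∑ j, ‖u j‖ ^ 2 := by
  have hnorm : ∀ z : EuclideanSpace ℝ (Fin n), ‖z‖ ^ 2 = ∑ t, (z t) ^ 2 := by
    intro z
    rw [EuclideanSpace.norm_eq, Real.sq_sqrt (by positivity)]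
    simp [sq_abs]
  have happ : ∀ (i : Fin m) (t : Fin n),
      (∑ j, (w i j - 1 / (m : ℝ)) • u j) t = ∑ j, (w i j - 1 / (m : ℝ)) * u j t := by
    intro i t
    induction (Finset.univ : Finset (Fin m)) using Finset.induction with
    | empty => rfl
    | @insert _ _ h ih =>
        rw [Finset.sum_insert h, Finset.sum_insert h, ← ih]
        rfl
  calc ∑ i, ‖∑ j, (w i j - 1 / (m : ℝ)) • u j‖ ^ 2
      = ∑ i, ∑ t, (∑ j, (w i j - 1 / (m : ℝ)) * u j t) ^ 2 := by
        refine Finset.sum_congr rfl fun i _ => ?_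
        rw [hnorm]
        exact Finset.sum_congr rfl fun t _ => by rw [happ]
    _ = ∑ t, ∑ i, (∑ j, (w i j - 1 / (m : ℝ)) * u j t) ^ 2 := Finset.sum_comm
    _ ≤ ∑ t, ρ ^ 2 * ∑ j, (u j t) ^ 2 :=
        Finset.sum_le_sum fun t _ => hcontr (fun j => u j t)
    _ = ρ ^ 2 * ∑ j, ‖u j‖ ^ 2 := by
        rw [← Finset.mul_sum, Finset.sum_comm]
        exact congrArg _ (Finset.sum_congr rfl fun j _ => (hnorm (u j)).symm)

lemma young_split (ρ A G : ℝ) (h0 : 0 < ρ) (h1 : ρ < 1) :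
    (A + G) ^ 2 ≤ (1 / ρ) * A ^ 2 + (1 / (1 - ρ)) * G ^ 2 := by
  have h2 : (0 : ℝ) < ρ * (1 - ρ) := by nlinarith
  have hρ' : ρ ≠ 0 := ne_of_gt h0
  have h1' : (1 : ℝ) - ρ ≠ 0 := by linarith
  rw [← sub_nonneg]
  have h3 : (1 / ρ) * A ^ 2 + (1 / (1 - ρ)) * G ^ 2 - (A + G) ^ 2
      = ((1 - ρ) * A - ρ * G) ^ 2 / (ρ * (1 - ρ)) := by
    field_simp
    ring
  rw [h3]
  positivity


/-- One-step consensus-error contraction for the gradient-tracking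
variables: for a doubly stochastic mixing matrix `W` with `‖W − (1/m)𝟏𝟏ᵀ‖₂ ≤ ρ < 1` and
`L`-smooth `f_i`, the gradient-tracking update
`v'_i = Σ_j w_{ij} v_j + ∇_x f_i(x'_i, y'_i) − ∇_x f_i(x_i, y_i)` satisfies
`‖V'_⊥‖² ≤ ρ‖V_⊥‖² + (L²/(1−ρ))(‖X' − X‖² + ‖Y' − Y‖²)`. -/
theorem dgdmax_tracking_consensus_contraction
    {m n₁ n₂ : ℕ} (hm : 0 < m) (hn₁ : 0 < n₁) (hn₂ : 0 < n₂)
    (L ρ : ℝ) (hL : 0 < L) (hρ0 : 0 < ρ) (hρ1 : ρ < 1)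
    (w : Fin m → Fin m → ℝ)
    (hrow : ∀ i, ∑ j, w i j = 1) (hcol : ∀ j, ∑ i, w i j = 1)
    (hcontr : ∀ v : Fin m → ℝ,
      ∑ i, (∑ j, (w i j - 1 / (m : ℝ)) * v j) ^ 2 ≤ ρ ^ 2 * ∑ j, (v j) ^ 2)
    (f : Fin m → EuclideanSpace ℝ (Fin n₁) → EuclideanSpace ℝ (Fin n₂) → ℝ)
    (Gx : Fin m → EuclideanSpace ℝ (Fin n₁) → EuclideanSpace ℝ (Fin n₂) →
      EuclideanSpace ℝ (Fin n₁))
    (Gy : Fin m → EuclideanSpace ℝ (Fin n₁) → EuclideanSpace ℝ (Fin n₂) →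
      EuclideanSpace ℝ (Fin n₂))
    (hGx : ∀ i x y, HasGradientAt (fun x' => f i x' y) (Gx i x y) x)
    (hGy : ∀ i x y, HasGradientAt (fun y' => f i x y') (Gy i x y) y)
    (hLip : ∀ i x y x' y',
      ‖Gx i x y - Gx i x' y'‖ ^ 2 + ‖Gy i x y - Gy i x' y'‖ ^ 2
        ≤ L ^ 2 * (‖x - x'‖ ^ 2 + ‖y - y'‖ ^ 2))
    (x x' v v' : Fin m → EuclideanSpace ℝ (Fin n₁))
    (y y' : Fin m → EuclideanSpace ℝ (Fin n₂))
    (hupd : ∀ i, v' i = (∑ j, w i j • v j) + Gx i (x' i) (y' i) - Gx i (x i) (y i)) :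
    ∑ i, ‖v' i - (1 / (m : ℝ)) • ∑ k, v' k‖ ^ 2
      ≤ ρ * ∑ i, ‖v i - (1 / (m : ℝ)) • ∑ k, v k‖ ^ 2
        + (L ^ 2 / (1 - ρ)) * (∑ i, ‖x' i - x i‖ ^ 2 + ∑ i, ‖y' i - y i‖ ^ 2) := by
  have hm0 : ((m : ℝ)) ≠ 0 := by positivity
  have h1ρ : (0 : ℝ) < 1 - ρ := by linarith
  set μ := (1 / (m : ℝ)) • ∑ k, v k with hμ
  set g : Fin m → EuclideanSpace ℝ (Fin n₁) :=
    fun i => Gx i (x' i) (y' i) - Gx i (x i) (y i) with hg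
  set u : Fin m → EuclideanSpace ℝ (Fin n₁) := fun j => v j - μ with hu
  set a : Fin m → EuclideanSpace ℝ (Fin n₁) :=
    fun i => ∑ j, (w i j - 1 / (m : ℝ)) • u j with ha
  have h0 : ∀ i, ∑ j, (w i j - 1 / (m : ℝ)) = 0 := by
    intro i
    rw [Finset.sum_sub_distrib, hrow i, Finset.sum_const]
    simp
    field_simp
    norm_num
  have hvd : ∀ i, v' i - μ = a i + g i := by
    intro i
    have hai : a i = ∑ j, w i j • v j - μ := by
      rw [ha]
      calc ∑ j, (w i j - 1 / (m : ℝ)) • u j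
          = ∑ j, ((w i j - 1 / (m : ℝ)) • v j) - ∑ j, ((w i j - 1 / (m : ℝ)) • μ) := by
            rw [← Finset.sum_sub_distrib]
            exact Finset.sum_congr rfl fun j _ => smul_sub _ _ _
        _ = ∑ j, ((w i j - 1 / (m : ℝ)) • v j) := by
            rw [← Finset.sum_smul, h0 i, zero_smul, sub_zero]
        _ = ∑ j, (w i j • v j - (1 / (m : ℝ)) • v j) :=
            Finset.sum_congr rfl fun j _ => sub_smul _ _ _
        _ = ∑ j, w i j • v j - μ := by
            rw [Finset.sum_sub_distrib, ← Finset.smul_sum, hμ]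
    rw [hupd i, hai]
    simp only [hg]
    abel
  -- bounds on g
  have hgb : ∀ i, ‖g i‖ ^ 2 ≤ L ^ 2 * (‖x' i - x i‖ ^ 2 + ‖y' i - y i‖ ^ 2) := by
    intro i
    have := hLip i (x' i) (y' i) (x i) (y i)
    have hGy0 : (0 : ℝ) ≤ ‖Gy i (x' i) (y' i) - Gy i (x i) (y i)‖ ^ 2 := by positivity
    simp only [hg]
    nlinarith
  have hGsum : ∑ i, ‖g i‖ ^ 2
      ≤ L ^ 2 * (∑ i, ‖x' i - x i‖ ^ 2 + ∑ i, ‖y' i - y i‖ ^ 2) := by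
    calc ∑ i, ‖g i‖ ^ 2
        ≤ ∑ i, L ^ 2 * (‖x' i - x i‖ ^ 2 + ‖y' i - y i‖ ^ 2) :=
          Finset.sum_le_sum fun i _ => hgb i
      _ = L ^ 2 * (∑ i, ‖x' i - x i‖ ^ 2 + ∑ i, ‖y' i - y i‖ ^ 2) := by
          rw [← Finset.mul_sum, Finset.sum_add_distrib]
  have hA : ∑ i, ‖a i‖ ^ 2 ≤ ρ ^ 2 * ∑ j, ‖u j‖ ^ 2 := by
    simpa [ha] using vec_contr ρ w hcontr u
  have step1 : ∑ i, ‖v' i - (1 / (m : ℝ)) • ∑ k, v' k‖ ^ 2 ≤ ∑ i, ‖a i + g i‖ ^ 2 := by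
    have := sum_sq_center_le hm v' μ
    calc ∑ i, ‖v' i - (1 / (m : ℝ)) • ∑ k, v' k‖ ^ 2
        ≤ ∑ i, ‖v' i - μ‖ ^ 2 := this
      _ = ∑ i, ‖a i + g i‖ ^ 2 := Finset.sum_congr rfl fun i _ => by rw [hvd i]
  have step2 : ∑ i, ‖a i + g i‖ ^ 2
      ≤ (1 / ρ) * ∑ i, ‖a i‖ ^ 2 + (1 / (1 - ρ)) * ∑ i, ‖g i‖ ^ 2 := by
    calc ∑ i, ‖a i + g i‖ ^ 2
        ≤ ∑ i, ((1 / ρ) * ‖a i‖ ^ 2 + (1 / (1 - ρ)) * ‖g i‖ ^ 2) := by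
          refine Finset.sum_le_sum fun i _ => ?_
          have h1 : ‖a i + g i‖ ≤ ‖a i‖ + ‖g i‖ := norm_add_le _ _
          have h2 : (‖a i‖ + ‖g i‖) ^ 2
              ≤ (1 / ρ) * ‖a i‖ ^ 2 + (1 / (1 - ρ)) * ‖g i‖ ^ 2 :=
            young_split ρ _ _ hρ0 hρ1
          nlinarith [norm_nonneg (a i + g i), norm_nonneg (a i), norm_nonneg (g i)]
      _ = (1 / ρ) * ∑ i, ‖a i‖ ^ 2 + (1 / (1 - ρ)) * ∑ i, ‖g i‖ ^ 2 := by
          rw [Finset.sum_add_distrib, ← Finset.mul_sum, ← Finset.mul_sum]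
  have hρinv : (1 / ρ) * (ρ ^ 2 * ∑ j, ‖u j‖ ^ 2) = ρ * ∑ j, ‖u j‖ ^ 2 := by
    field_simp
  have husum : ∑ i, ‖v i - (1 / (m : ℝ)) • ∑ k, v k‖ ^ 2 = ∑ j, ‖u j‖ ^ 2 := by
    exact Finset.sum_congr rfl fun i _ => by rw [hu]
  calc ∑ i, ‖v' i - (1 / (m : ℝ)) • ∑ k, v' k‖ ^ 2
      ≤ (1 / ρ) * ∑ i, ‖a i‖ ^ 2 + (1 / (1 - ρ)) * ∑ i, ‖g i‖ ^ 2 :=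
        le_trans step1 step2
    _ ≤ (1 / ρ) * (ρ ^ 2 * ∑ j, ‖u j‖ ^ 2)
        + (1 / (1 - ρ)) * (L ^ 2 * (∑ i, ‖x' i - x i‖ ^ 2 + ∑ i, ‖y' i - y i‖ ^ 2)) := by
        exact add_le_add (mul_le_mul_of_nonneg_left hA (by positivity))
          (mul_le_mul_of_nonneg_left hGsum (by positivity))
    _ = ρ * ∑ i, ‖v i - (1 / (m : ℝ)) • ∑ k, v k‖ ^ 2
        + (L ^ 2 / (1 - ρ)) * (∑ i, ‖x' i - x i‖ ^ 2 + ∑ i, ‖y' i - y i‖ ^ 2) := by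
        rw [husum, hρinv]
        ring
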